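/- Let v_{i-1}, v_i, v_{i+1} be real numbers with a = v_i - v_{i-1} ≠ 0, set r = (v_{i+1} - v_i)/a, and assume r ≠ 1. Define the nonlinear weight μ₀ = max(3/4, min((2-r)/(1-r), -r/(1-r))). Then Q(μ₀) = μ₀·(v_i + v_{i-1})/2 + (1-μ₀)·(3v_i - v_{i+1})/2 satisfies min(v_{i-1}, v_i, v_{i+1}) ≤ Q(μ₀) ≤ max(v_{i-1}, v_i, v_{i+1}). -/
import Mathlib


theorem stmt_7 (vm v vp : ℝ) (ha : v - vm ≠ 0)
    (r : ℝ) (hr : r = (vp - v) / (v - vm)) (hr1 : r ≠ 1)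
    (μ₀ : ℝ) (hμ : μ₀ = max (3/4) (min ((2 - r) / (1 - r)) (-r / (1 - r)))) :
    min (min vm v) vp ≤ μ₀ * (v + vm) / 2 + (1 - μ₀) * (3 * v - vp) / 2 ∧
      μ₀ * (v + vm) / 2 + (1 - μ₀) * (3 * v - vp) / 2 ≤ max (max vm v) vp := by
  have hs : (1 : ℝ) - r ≠ 0 := sub_ne_zero.mpr (Ne.symm hr1)
  have hvp : vp = v + r * (v - vm) := by
    field_simp at hr
    linarith
  have hc0 : 0 ≤ r + μ₀ * (1 - r) ∧ r + μ₀ * (1 - r) ≤ 2 := by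
    rcases lt_or_gt_of_ne hs with hneg | hpos
    · -- 1 - r < 0
      have h1 : (2 - r) / (1 - r) ≤ -r / (1 - r) := by
        rw [div_le_div_right_of_neg hneg]; linarith
      have hlb : (2 - r) / (1 - r) ≤ μ₀ := by
        rw [hμ]
        exact le_trans (le_min le_rfl h1) (le_max_right _ _)
      have hub : μ₀ ≤ -r / (1 - r) := by
        rw [hμ]
        apply max_le
        · rw [le_div_iff_of_neg hneg]; linarith
        · exact min_le_right _ _
      constructor
      · have := (le_div_iff_of_neg hneg).mp hub
        linarith
      · have := (div_le_iff_of_neg hneg).mp hlb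
        linarith
    · -- 0 < 1 - r
      have hlb : -r / (1 - r) ≤ μ₀ := by
        rw [hμ]
        refine le_trans (le_min ?_ le_rfl) (le_max_right _ _)
        rw [div_le_div_iff_of_pos_right hpos]; linarith
      have hub : μ₀ ≤ (2 - r) / (1 - r) := by
        rw [hμ]
        apply max_le
        · rw [le_div_iff₀ hpos]; linarith
        · exact min_le_left _ _
      constructor
      · have := (div_le_iff₀ hpos).mp hlb
        linarith
      · have := (le_div_iff₀ hpos).mp hub
        linarith
  obtain ⟨h0, h2⟩ := hc0
  subst hvp
  constructor
  · refine le_trans (min_le_left _ _) ?_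
    rcases le_total vm v with h | h
    · rw [min_eq_left h]
      nlinarith [mul_nonneg (sub_nonneg.mpr h) (by linarith : (0:ℝ) ≤ 2 - (r + μ₀ * (1 - r)))]
    · rw [min_eq_right h]
      nlinarith [mul_nonneg (sub_nonneg.mpr h) h0]
  · refine le_trans ?_ (le_max_left _ _)
    rcases le_total vm v with h | h
    · rw [max_eq_right h]
      nlinarith [mul_nonneg (sub_nonneg.mpr h) h0]
    · rw [max_eq_left h]
      nlinarith [mul_nonneg (sub_nonneg.mpr h) (by linarith : (0:ℝ) ≤ 2 - (r + μ₀ * (1 - r)))]
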